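/- arXiv:math/0601430 — 3 statements merged into one kernel-verified Lean document; each statement's English description precedes it below -/
import Mathlib

section
/- Let U ⊆ ℂ be an open disk centered at 0 and h : U → ℂ analytic with h(z) ≠ 0 for all z ∈ U. Consider the differential equation dz/dt = i/(z·h(z)) on U ∖ {0}. Then there exist an open disk Ũ ⊆ U containing 0 and a biholomorphic map ξ : Ũ → ξ(Ũ) with ξ(0) = 0 such that, setting ω = √2·ξ(z), the equation transforms to dω/dt = 1/ω on ξ(Ũ) ∖ {0}. -/
open Complex Metric

/-- Normal form for the differential equation `dz/dt = i/(z h(z))` near the singular point: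
there is a biholomorphic change of coordinates `ξ` with `ξ(0) = 0` such that `ω = √2 ξ(z)`
solves `dω/dt = 1/ω` whenever `z` solves the original equation. -/
theorem stmt_3 (R : ℝ) (hR : 0 < R) (h : ℂ → ℂ)
    (hh : AnalyticOnNhd ℂ h (ball (0 : ℂ) R))
    (hne : ∀ z ∈ ball (0 : ℂ) R, h z ≠ 0) :
    ∃ r : ℝ, 0 < r ∧ ball (0 : ℂ) r ⊆ ball (0 : ℂ) R ∧
      ∃ ξ : ℂ → ℂ,
        AnalyticOnNhd ℂ ξ (ball (0 : ℂ) r) ∧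
        Set.InjOn ξ (ball (0 : ℂ) r) ∧
        IsOpen (ξ '' ball (0 : ℂ) r) ∧
        ξ 0 = 0 ∧
        -- every solution of `dz/dt = i/(z h(z))` in the disk is transformed by
        -- `ω = √2 ξ(z)` into a solution of `dω/dt = 1/ω`.
        ∀ (z : ℝ → ℂ) (t : ℝ), z t ∈ ball (0 : ℂ) r → z t ≠ 0 →
          HasDerivAt z (Complex.I / (z t * h (z t))) t →
          HasDerivAt (fun s => (Real.sqrt 2 : ℂ) * ξ (z s))
            (1 / ((Real.sqrt 2 : ℂ) * ξ (z t))) t := by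
  classical
  -- power series of `h` at `0`
  obtain ⟨p, hp⟩ := hh 0 (mem_ball_self hR)
  obtain ⟨ε, hε⟩ := hp
  -- pick a radius `ρ` inside both the radius of convergence and `R`
  obtain ⟨ρ, hρ0, hρlt⟩ := ENNReal.lt_iff_exists_nnreal_btwn.1
    (lt_min hε.r_pos (by simpa using ENNReal.ofReal_pos.2 hR) : (0:ENNReal) < min ε (ENNReal.ofReal R))
  have hρε : (ρ : ENNReal) < ε := hρlt.trans_le (min_le_left _ _)
  have hρR : (ρ : ℝ) < R := by
    have := hρlt.trans_le (min_le_right _ _)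
    rw [ENNReal.lt_ofReal_iff_toReal_lt ENNReal.coe_ne_top] at this
    simpa using this
  have hρ0' : (0:ℝ) < ρ := by
    have : (0:NNReal) < ρ := by exact_mod_cast hρ0
    exact_mod_cast this
  set a : ℕ → ℂ := p.coeff with ha
  set c : ℕ → ℂ := fun n => -Complex.I * a n / ((n : ℂ) + 2) with hc
  have hc_ne : ∀ n : ℕ, ((n : ℂ) + 2) ≠ 0 := by
    intro n
    intro hcon
    have := congrArg Complex.re hcon
    simp at this
    have : (0:ℝ) ≤ (n:ℝ) := Nat.cast_nonneg n
    linarith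
  -- `h` as a sum on the ball
  have hsum : ∀ y : ℂ, y ∈ ball (0:ℂ) (ρ:ℝ) → HasSum (fun n => a n * y ^ n) (h y) := by
    intro y hy
    have hy' : y ∈ Metric.eball (0:ℂ) ε := by
      have : y ∈ Metric.eball (0:ℂ) (ρ:ENNReal) := by rwa [Metric.emetric_ball_nnreal]
      exact Metric.eball_subset_eball hρε.le this
    have hS := hε.hasSum hy'
    have heq : (fun n => p n fun _ => y) = fun n => a n * y ^ n := by
      funext n
      rw [p.apply_eq_pow_smul_coeff]
      simp [smul_eq_mul, mul_comm, ha]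
    rw [heq, zero_add] at hS
    exact hS
  -- summability of the coefficients
  have hsumm : Summable fun n => ‖p n‖ * (ρ:ℝ) ^ n :=
    p.summable_norm_mul_pow (hρε.trans_le hε.r_le)
  -- the series `G` with coefficients `c n`
  set q : FormalMultilinearSeries ℂ ℂ ℂ := FormalMultilinearSeries.ofScalars ℂ c with hq
  have hqnorm : ∀ n, ‖q n‖ ≤ ‖p n‖ := by
    intro n
    rw [hq, FormalMultilinearSeries.ofScalars_norm, p.norm_apply_eq_norm_coef]
    simp only [hc, norm_div, norm_mul, norm_neg, Complex.norm_I, one_mul]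
    have h1 : (1:ℝ) ≤ ‖(n:ℂ) + 2‖ := by
      rw [show ((n:ℂ) + 2) = (((n:ℝ) + 2 : ℝ) : ℂ) by push_cast; ring,
        Complex.norm_real, Real.norm_eq_abs]
      rw [_root_.abs_of_nonneg (by positivity : (0:ℝ) ≤ (n:ℝ) + 2)]
      linarith [Nat.cast_nonneg (α := ℝ) n]
    exact div_le_self (norm_nonneg _) h1
  have hqrad : (ρ : ENNReal) ≤ q.radius := by
    apply q.le_radius_of_summable
    exact hsumm.of_nonneg_of_le (fun n => by positivity)
      (fun n => mul_le_mul_of_nonneg_right (hqnorm n) (by positivity))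
  set G : ℂ → ℂ := q.sum with hGdef
  have hGball : HasFPowerSeriesOnBall G q 0 (ρ : ENNReal) :=
    (q.hasFPowerSeriesOnBall (lt_of_lt_of_le (by exact_mod_cast hρ0) hqrad)).mono
      (by exact_mod_cast hρ0) hqrad
  have hGan : ∀ y ∈ ball (0:ℂ) (ρ:ℝ), AnalyticAt ℂ G y := by
    intro y hy
    have : y ∈ Metric.eball (0:ℂ) (ρ:ENNReal) := by rwa [Metric.emetric_ball_nnreal]
    exact hGball.analyticOnNhd y (by simpa using this)
  have hGsum : ∀ y ∈ ball (0:ℂ) (ρ:ℝ), HasSum (fun n => c n * y ^ n) (G y) := by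
    intro y hy
    have hy' : y ∈ Metric.eball (0:ℂ) (ρ:ENNReal) := by rwa [Metric.emetric_ball_nnreal]
    have hS := hGball.hasSum hy'
    have heq : (fun n => q n fun _ => y) = fun n => c n * y ^ n := by
      funext n
      rw [FormalMultilinearSeries.ofScalars_apply_eq]
      simp [smul_eq_mul]
    rw [heq, zero_add] at hS
    exact hS
  -- value at 0
  have ha0 : a 0 = h 0 := by
    have h0 := hε.coeff_zero (fun _ => 1)
    rw [ha]
    exact h0
  have hh0 : h 0 ≠ 0 := hne 0 (mem_ball_self hR)
  have hG0 : G 0 = -Complex.I * h 0 / 2 := by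
    have hS := hGsum 0 (mem_ball_self hρ0')
    have heq : (fun n => c n * (0:ℂ) ^ n) = fun n => if n = 0 then c 0 else 0 := by
      funext n
      rcases n with _ | n
      · norm_num
      · rw [if_neg (Nat.succ_ne_zero n), zero_pow (Nat.succ_ne_zero n), mul_zero]
    rw [heq] at hS
    have ht := hS.tsum_eq
    rw [tsum_eq_single 0 (fun n hn => by simp [hn])] at ht
    rw [if_pos rfl] at ht
    rw [← ht]
    simp only [hc, Nat.cast_zero]
    rw [ha0]
    ring
  have hG0ne : G 0 ≠ 0 := by
    rw [hG0]
    simp [hh0, Complex.I_ne_zero]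
  -- derivative of `H z = ∑ c n z^(n+2)`
  have hH : ∀ y ∈ ball (0:ℂ) (ρ:ℝ),
      HasDerivAt (fun z : ℂ => ∑' n, c n * z ^ (n + 2)) (-Complex.I * y * h y) y := by
    intro y hy
    have key : HasDerivAt (fun z : ℂ => ∑' n, c n * z ^ (n + 2))
        (∑' n, (-Complex.I * a n) * y ^ (n + 1)) y := by
      apply hasDerivAt_tsum_of_isPreconnected
        (u := fun n => (ρ:ℝ) * (‖p n‖ * (ρ:ℝ) ^ n)) (hsumm.mul_left _)
        isOpen_ball (convex_ball _ _).isPreconnected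
        (g' := fun n z => (-Complex.I * a n) * z ^ (n + 1))
        ?_ ?_ (mem_ball_self hρ0') ?_ hy
      · intro n z hz
        have hd := (hasDerivAt_pow (n + 2) z).const_mul (c n)
        refine hd.congr_deriv ?_
        symm
        have hexp : n + 2 - 1 = n + 1 := rfl
        rw [hexp]
        simp only [hc]
        push_cast
        have h2n : (2 + (n:ℂ)) ≠ 0 := by
          intro hcon
          apply hc_ne n
          rw [add_comm] at hcon
          exact hcon
        field_simp [h2n]
        have hinv : (2 + (n:ℂ)) * (2 + (n:ℂ))⁻¹ = 1 := mul_inv_cancel₀ h2n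
        linear_combination (a n * z * z ^ n) * hinv
      · intro n z hz
        have hz' : ‖z‖ < (ρ:ℝ) := by simpa using hz
        have h1 : ‖(-Complex.I * a n) * z ^ (n + 1)‖ = ‖a n‖ * ‖z‖ ^ (n + 1) := by
          simp [norm_mul, norm_pow]
        rw [h1]
        have h2 : ‖z‖ ^ (n + 1) ≤ (ρ:ℝ) ^ (n + 1) :=
          pow_le_pow_left₀ (norm_nonneg _) hz'.le _
        calc ‖a n‖ * ‖z‖ ^ (n + 1) ≤ ‖a n‖ * (ρ:ℝ) ^ (n + 1) :=
              mul_le_mul_of_nonneg_left h2 (norm_nonneg _)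
          _ = (ρ:ℝ) * (‖a n‖ * (ρ:ℝ) ^ n) := by ring
          _ = (ρ:ℝ) * (‖p n‖ * (ρ:ℝ) ^ n) := by rw [p.norm_apply_eq_norm_coef]
      · exact summable_zero.congr fun n => by simp
    have hval : (∑' n, (-Complex.I * a n) * y ^ (n + 1)) = -Complex.I * y * h y := by
      have hS := (hsum y hy).mul_left (-Complex.I * y)
      have heq : (fun n => (-Complex.I * y) * (a n * y ^ n)) =
          fun n => (-Complex.I * a n) * y ^ (n + 1) := by
        funext n; ring
      rw [heq] at hS
      rw [hS.tsum_eq]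
    rwa [hval] at key
  -- `H = z^2 * G`
  have hHG : ∀ y ∈ ball (0:ℂ) (ρ:ℝ), (∑' n, c n * y ^ (n + 2)) = y ^ 2 * G y := by
    intro y hy
    have := ((hGsum y hy).mul_left (y ^ 2)).tsum_eq
    rw [← this]
    congr 1
    funext n
    ring
  -- square root of `G 0`
  obtain ⟨s, hs⟩ := IsAlgClosed.exists_pow_nat_eq (k := ℂ) (G 0) (n := 2) two_pos
  have hsne : s ≠ 0 := by
    intro h0
    rw [h0] at hs
    simp at hs
    exact hG0ne hs.symm
  -- square root function and coordinate change
  set sq : ℂ → ℂ := fun z => s * Complex.exp (Complex.log (G z / G 0) / 2) with hsqdef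
  set ξ : ℂ → ℂ := fun z => z * sq z with hξdef
  have hsqne : ∀ z, sq z ≠ 0 := fun z =>
    mul_ne_zero hsne (Complex.exp_ne_zero _)
  have hballslit : ∀ w : ℂ, w ∈ ball (1:ℂ) 2⁻¹ → w ∈ Complex.slitPlane := by
    intro w hw
    rw [mem_ball_iff_norm] at hw
    rw [Complex.mem_slitPlane_iff]
    left
    have : |w.re - 1| ≤ ‖w - 1‖ := by
      have := Complex.abs_re_le_norm (w - 1)
      simpa using this
    have : |w.re - 1| < 2⁻¹ := lt_of_le_of_lt this hw
    have := abs_lt.1 this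
    linarith [this.1]
  have hballne : ∀ w : ℂ, w ∈ ball (1:ℂ) 2⁻¹ → w ≠ 0 := by
    intro w hw h0
    rw [h0, mem_ball_iff_norm] at hw
    norm_num at hw
  -- squaring property
  have hsq_sq : ∀ z : ℂ, G z / G 0 ∈ ball (1:ℂ) 2⁻¹ → (sq z) ^ 2 = G z := by
    intro z hz
    rw [hsqdef]
    simp only []
    rw [mul_pow, hs, ← Complex.exp_nat_mul]
    have : (2:ℂ) * (Complex.log (G z / G 0) / 2) = Complex.log (G z / G 0) := by ring
    rw [show ((2:ℕ):ℂ) = (2:ℂ) by norm_num, this, Complex.exp_log (hballne _ hz)]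
    field_simp
  -- analyticity of ξ at suitable points
  have hξan : ∀ z ∈ ball (0:ℂ) (ρ:ℝ), G z / G 0 ∈ ball (1:ℂ) 2⁻¹ → AnalyticAt ℂ ξ z := by
    intro z hz hz2
    apply AnalyticAt.mul analyticAt_id
    apply AnalyticAt.mul analyticAt_const
    apply AnalyticAt.cexp
    apply AnalyticAt.div _ analyticAt_const two_ne_zero
    exact AnalyticAt.clog ((hGan z hz).div analyticAt_const hG0ne) (hballslit _ hz2)
  -- strict derivative of ξ at 0 and the local homeomorphism
  have h0ball : (0:ℂ) ∈ ball (0:ℂ) (ρ:ℝ) := mem_ball_self hρ0'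
  have h0pre : G 0 / G 0 ∈ ball (1:ℂ) 2⁻¹ := by
    rw [div_self hG0ne]; exact mem_ball_self (by norm_num)
  have hξ0an : AnalyticAt ℂ ξ 0 := hξan 0 h0ball h0pre
  -- derivative of ξ at 0 is sq 0 ≠ 0
  have hsqan : AnalyticAt ℂ sq 0 := by
    apply AnalyticAt.mul analyticAt_const
    apply AnalyticAt.cexp
    apply AnalyticAt.div _ analyticAt_const two_ne_zero
    exact AnalyticAt.clog ((hGan 0 h0ball).div analyticAt_const hG0ne) (hballslit _ h0pre)
  have hξd0 : HasDerivAt ξ (sq 0) 0 := by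
    have h1 : HasDerivAt (fun z : ℂ => z) 1 0 := hasDerivAt_id 0
    have h2 : HasDerivAt sq (deriv sq 0) 0 := hsqan.differentiableAt.hasDerivAt
    have := h1.mul h2
    simp at this; exact this
  obtain ⟨P, hP⟩ := hξ0an
  have hstrict : HasStrictDerivAt ξ (sq 0) 0 := by
    have := hP.hasStrictDerivAt
    rwa [this.hasDerivAt.unique hξd0] at this
  set e := (hstrict.hasStrictFDerivAt_equiv (hsqne 0)).toOpenPartialHomeomorph ξ with he
  have hecoe : (e : ℂ → ℂ) = ξ := HasStrictFDerivAt.toOpenPartialHomeomorph_coe _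
  have h0src : (0:ℂ) ∈ e.source := HasStrictFDerivAt.mem_toOpenPartialHomeomorph_source _
  -- choose the final radius r
  have hGcont : ContinuousAt (fun z => G z / G 0) 0 :=
    ((hGan 0 h0ball).continuousAt).div continuousAt_const hG0ne
  have hpre_nhds : (fun z => G z / G 0) ⁻¹' (ball (1:ℂ) 2⁻¹) ∈ nhds (0:ℂ) := by
    apply hGcont.preimage_mem_nhds
    exact isOpen_ball.mem_nhds h0pre
  have hnhds : (e.source ∩ ((fun z => G z / G 0) ⁻¹' (ball (1:ℂ) 2⁻¹)) ∩ ball (0:ℂ) (ρ:ℝ))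
      ∈ nhds (0:ℂ) := by
    exact Filter.inter_mem (Filter.inter_mem (e.open_source.mem_nhds h0src) hpre_nhds)
      (isOpen_ball.mem_nhds h0ball)
  obtain ⟨r, hr0, hrball⟩ := Metric.mem_nhds_iff.1 hnhds
  have hrρ : ball (0:ℂ) r ⊆ ball (0:ℂ) (ρ:ℝ) := fun z hz => (hrball hz).2
  have hrsrc : ball (0:ℂ) r ⊆ e.source := fun z hz => (hrball hz).1.1
  have hrpre : ∀ z ∈ ball (0:ℂ) r, G z / G 0 ∈ ball (1:ℂ) 2⁻¹ := fun z hz => (hrball hz).1.2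
  have hrR : ball (0:ℂ) r ⊆ ball (0:ℂ) R :=
    hrρ.trans (ball_subset_ball hρR.le)
  refine ⟨r, hr0, hrR, ξ, ?_, ?_, ?_, ?_, ?_⟩
  · exact fun z hz => hξan z (hrρ hz) (hrpre z hz)
  · rw [← hecoe]
    exact e.injOn.mono hrsrc
  · rw [← hecoe]
    exact e.isOpen_image_of_subset_source isOpen_ball hrsrc
  · simp [hξdef]
  · -- the ODE transformation
    intro z t hzt hzt0 hzd
    set w := z t with hw
    have hwρ : w ∈ ball (0:ℂ) (ρ:ℝ) := hrρ hzt
    have hwR : w ∈ ball (0:ℂ) R := hrR hzt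
    have hhw : h w ≠ 0 := hne w hwR
    have hξw_an : AnalyticAt ℂ ξ w := hξan w hwρ (hrpre w hzt)
    have hξd : HasDerivAt ξ (deriv ξ w) w := hξw_an.differentiableAt.hasDerivAt
    set D := deriv ξ w with hD
    -- key identity: 2 ξ w * D = -I * w * h w
    have hkey : 2 * ξ w * D = -Complex.I * w * h w := by
      have h1 : HasDerivAt (fun z => ξ z ^ 2) (2 * ξ w * D) w := by
        have := hξd.pow 2
        refine this.congr_deriv ?_
        symm
        push_cast
        ring
      have h2 : HasDerivAt (fun z => ξ z ^ 2) (-Complex.I * w * h w) w := by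
        have hH' := hH w hwρ
        apply hH'.congr_of_eventuallyEq
        filter_upwards [isOpen_ball.mem_nhds hzt] with x hx
        have hx2 : ξ x ^ 2 = x ^ 2 * G x := by
          rw [hξdef]
          simp only []
          rw [mul_pow, hsq_sq x (hrpre x hx)]
        rw [hx2, hHG x (hrρ hx)]
      exact h1.unique h2
    have hξwne : ξ w ≠ 0 := by
      rw [hξdef]
      exact mul_ne_zero hzt0 (hsqne w)
    -- assemble
    have hcomp : HasDerivAt (fun s => ξ (z s)) (D * (Complex.I / (w * h w))) t :=
      HasDerivAt.comp t hξd hzd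
    have hfinal := hcomp.const_mul ((Real.sqrt 2 : ℝ) : ℂ)
    have hsqrt2 : ((Real.sqrt 2 : ℝ) : ℂ) * ((Real.sqrt 2 : ℝ) : ℂ) = 2 := by
      rw [← Complex.ofReal_mul, Real.mul_self_sqrt (by norm_num)]
      norm_num
    have hsqrt2ne : ((Real.sqrt 2 : ℝ) : ℂ) ≠ 0 := by
      intro h0
      rw [h0] at hsqrt2
      simp at hsqrt2
    have hwhne : w * h w ≠ 0 := mul_ne_zero hzt0 hhw
    have hDval : D = -Complex.I * w * h w / (2 * ξ w) := by
      rw [eq_div_iff (mul_ne_zero two_ne_zero hξwne)]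
      linear_combination hkey
    have hIval : Complex.I * Complex.I = -1 := Complex.I_mul_I
    have hveq : ((Real.sqrt 2 : ℝ) : ℂ) * (D * (Complex.I / (w * h w))) =
        1 / (((Real.sqrt 2 : ℝ) : ℂ) * ξ w) := by
      rw [hDval]
      field_simp
      linear_combination (-(Complex.I * Complex.I)) * hsqrt2 - 2 * hIval
    exact hfinal.congr_deriv hveq
end

section
/- Let α be irrational, T x = x + α on 𝕋, and let f_pl(x) = ∑_{i=1}^k d_i {x − β_i} + c be piecewise linear (where {·} is the fractional part). Then for x < y in [0,1) and every n ≥ 0: f_pl^{(n)}(y) − f_pl^{(n)}(x) = n·S·(y − x) − d̄_n, where S = ∑_{i=1}^k d_i and d̄_n = ∑ d_i, the sum taken over all pairs (i, j) with 1 ≤ i ≤ k, 0 ≤ j < n such that {β_i − jα} ∈ (x, y]. -/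
lemma fract_step (x y t : ℝ) (hx : 0 ≤ x) (hxy : x < y) (hy : y < 1) :
    Int.fract (y - t) - Int.fract (x - t) =
      (y - x) - (if Int.fract t ∈ Set.Ioc x y then 1 else 0) := by
  have hu0 := Int.fract_nonneg t
  have hu1 := Int.fract_lt_one t
  have h1 : Int.fract (y - t) = Int.fract (y - Int.fract t) := by
    conv_lhs => rw [show y - t = y - Int.fract t - (⌊t⌋ : ℤ) by rw [Int.fract]; push_cast; ring]
    rw [Int.fract_sub_intCast]
  have h2 : Int.fract (x - t) = Int.fract (x - Int.fract t) := by
    conv_lhs => rw [show x - t = x - Int.fract t - (⌊t⌋ : ℤ) by rw [Int.fract]; push_cast; ring]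
    rw [Int.fract_sub_intCast]
  set u := Int.fract t with hu
  rw [h1, h2]
  split_ifs with h
  · obtain ⟨hxu, huy⟩ := h
    rw [Int.fract_eq_self.2 ⟨by linarith, by linarith⟩,
      show x - u = (x - u + 1) - ((1 : ℤ) : ℝ) by push_cast; ring, Int.fract_sub_intCast,
      Int.fract_eq_self.2 ⟨by linarith, by linarith⟩]
    ring
  · rw [Set.mem_Ioc, not_and_or, not_lt, not_le] at h
    rcases h with hux | huy
    · rw [Int.fract_eq_self.2 ⟨by linarith, by linarith⟩,
        Int.fract_eq_self.2 ⟨by linarith, by linarith⟩]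
      ring
    · rw [show y - u = (y - u + 1) - ((1 : ℤ) : ℝ) by push_cast; ring, Int.fract_sub_intCast,
        Int.fract_eq_self.2 ⟨by linarith, by linarith⟩,
        show x - u = (x - u + 1) - ((1 : ℤ) : ℝ) by push_cast; ring, Int.fract_sub_intCast,
        Int.fract_eq_self.2 ⟨by linarith, by linarith⟩]
      ring

/-- Exact Birkhoff-sum formula for the piecewise linear part: with
`f_pl(x) = ∑ i, d_i {x - β_i} + c`, `S = ∑ i, d_i` and the rotation by `α`,
`f_pl^{(n)}(y) - f_pl^{(n)}(x) = n S (y-x) - d̄_n`, where `d̄_n` sums the jumps `d_i`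
over all pairs `(i,j)`, `j < n`, with `{β_i - jα} ∈ (x, y]`. -/
theorem stmt_10 (α : ℝ) (hα : Irrational α) (k : ℕ) (β d : Fin k → ℝ) (c : ℝ)
    (fpl : ℝ → ℝ) (hfpl : ∀ z : ℝ, fpl z = (∑ i, d i * Int.fract (z - β i)) + c)
    (x y : ℝ) (hx : 0 ≤ x) (hxy : x < y) (hy : y < 1) (n : ℕ) :
    (∑ j ∈ Finset.range n, fpl (y + j * α)) - (∑ j ∈ Finset.range n, fpl (x + j * α)) =
      (n : ℝ) * (∑ i, d i) * (y - x) -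
        ∑ i, ∑ j ∈ Finset.range n,
          if Int.fract (β i - j * α) ∈ Set.Ioc x y then d i else 0 := by
  simp only [hfpl]
  rw [← Finset.sum_sub_distrib, Finset.sum_comm (t := Finset.range n)]
  have key : ∀ j ∈ Finset.range n,
      ((∑ i, d i * Int.fract (y + j * α - β i)) + c) -
        ((∑ i, d i * Int.fract (x + j * α - β i)) + c) =
      (∑ i, d i) * (y - x) -
        ∑ i, (if Int.fract (β i - j * α) ∈ Set.Ioc x y then d i else 0) := by
    intro j _
    have : ∀ i : Fin k,
        d i * Int.fract (y + j * α - β i) - d i * Int.fract (x + j * α - β i) =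
          d i * (y - x) - (if Int.fract (β i - j * α) ∈ Set.Ioc x y then d i else 0) := by
      intro i
      have := fract_step x y (β i - j * α) hx hxy hy
      rw [show y + j * α - β i = y - (β i - j * α) by ring,
        show x + j * α - β i = x - (β i - j * α) by ring, ← mul_sub, this]
      split_ifs <;> ring
    rw [show ((∑ i, d i * Int.fract (y + j * α - β i)) + c) -
        ((∑ i, d i * Int.fract (x + j * α - β i)) + c) =
        ∑ i, (d i * Int.fract (y + j * α - β i) - d i * Int.fract (x + j * α - β i)) by
        rw [Finset.sum_sub_distrib]; ring]
    rw [Finset.sum_congr rfl fun i _ => this i, Finset.sum_sub_distrib, ← Finset.sum_mul]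
  rw [Finset.sum_congr rfl key, Finset.sum_sub_distrib, Finset.sum_const, Finset.card_range,
    nsmul_eq_mul, ← mul_assoc]
end

section
/- Let T : (X, B, μ) → (X, B, μ) be ergodic and f ∈ L¹(X, μ) with f ≥ c > 0. If the special flow T^f over T under f is partially rigid along a sequence t_n → +∞ with constant u ∈ (0,1], then for every 0 < ε < c: liminf_{n→∞} μ{x ∈ X : ∃ j ∈ ℕ, |f^{(j)}(x) − t_n| < ε} ≥ u. -/
open MeasureTheory Filter

/-- If the special flow `T^f` over an ergodic `T` with roof `f ≥ c > 0` is partially rigid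
along `t_n → +∞` with constant `u`, then for every `0 < ε < c`,
`liminf μ{x : ∃ j, |f^{(j)}(x) - t_n| < ε} ≥ u`. -/
theorem stmt_12 {X : Type*} [MeasurableSpace X] (μ : Measure X) [IsProbabilityMeasure μ]
    (T : X → X) (hT : MeasurePreserving T μ μ)
    (hTerg : ∀ A : Set X, MeasurableSet A → T ⁻¹' A = A → μ A = 0 ∨ μ A = 1)
    (f : X → ℝ) (hfL1 : Integrable f μ) (c : ℝ) (hc : 0 < c) (hfc : ∀ x, c ≤ f x)
    -- the special flow space and measure
    (Xf : Set (X × ℝ)) (hXf : Xf = {p : X × ℝ | 0 ≤ p.2 ∧ p.2 < f p.1})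
    (μf : Measure (X × ℝ)) (hμf : μf = (μ.prod volume).restrict Xf)
    -- the special flow for positive times: vertical motion with identification
    -- `(x, f x) ∼ (T x, 0)`
    (Tf : ℝ → X × ℝ → X × ℝ)
    (hTf : ∀ t : ℝ, 0 ≤ t → ∀ x : X, ∀ s : ℝ, 0 ≤ s → s < f x →
      ∃ n : ℕ, (∑ i ∈ Finset.range n, f (T^[i] x)) ≤ s + t ∧
        s + t < (∑ i ∈ Finset.range (n + 1), f (T^[i] x)) ∧
        Tf t (x, s) = (T^[n] x, s + t - ∑ i ∈ Finset.range n, f (T^[i] x)))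
    -- partial rigidity along `t_n → +∞` with constant `u`
    (t : ℕ → ℝ) (ht : Tendsto t atTop atTop) (u : ℝ) (hu0 : 0 < u) (hu1 : u ≤ 1)
    (hrig : ∀ D : Set (X × ℝ), MeasurableSet D → D ⊆ Xf →
      ENNReal.ofReal u * μf D ≤ atTop.liminf fun n => μf (D ∩ Tf (t n) ⁻¹' D)) :
    ∀ ε : ℝ, 0 < ε → ε < c →
      ENNReal.ofReal u ≤ atTop.liminf fun n =>
        μ {x : X | ∃ j : ℕ, |(∑ i ∈ Finset.range j, f (T^[i] x)) - t n| < ε} := by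

  intro ε hε hεc
  -- the horizontal slab A = X × [0, ε)
  set A : Set (X × ℝ) := Set.univ ×ˢ Set.Ico (0:ℝ) ε with hA
  have hAmeas : MeasurableSet A := MeasurableSet.univ.prod measurableSet_Ico
  have hAsub : A ⊆ Xf := by
    rintro ⟨x, s⟩ ⟨-, hs0, hsε⟩
    rw [hXf]
    exact ⟨hs0, lt_of_lt_of_le (hsε.trans hεc) (hfc x)⟩
  -- μf A = ε
  have hAval : μf A = ENNReal.ofReal ε := by
    rw [hμf, Measure.restrict_apply hAmeas, Set.inter_eq_left.mpr hAsub,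
      Measure.prod_prod, measure_univ, one_mul, Real.volume_Ico, sub_zero]
  have h1 := hrig A hAmeas hAsub
  rw [hAval] at h1
  set B : ℕ → Set X := fun n =>
    {x : X | ∃ j : ℕ, |(∑ i ∈ Finset.range j, f (T^[i] x)) - t n| < ε} with hB
  -- eventually, A ∩ Tf(t n)⁻¹ A ⊆ B n × [0, ε)
  have hev : ∀ᶠ n in atTop, μf (A ∩ Tf (t n) ⁻¹' A) ≤ ENNReal.ofReal ε * μ (B n) := by
    filter_upwards [ht.eventually_ge_atTop 0] with n htn
    have hsub : A ∩ Tf (t n) ⁻¹' A ⊆ B n ×ˢ Set.Ico (0:ℝ) ε := by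
      rintro ⟨x, s⟩ ⟨⟨-, hs0, hsε⟩, hpre⟩
      have hsf : s < f x := lt_of_lt_of_le (hsε.trans hεc) (hfc x)
      obtain ⟨m, hm1, hm2, hm3⟩ := hTf (t n) htn x s hs0 hsf
      rw [Set.mem_preimage, hm3] at hpre
      obtain ⟨-, hr0, hrε⟩ := hpre
      refine ⟨⟨m, ?_⟩, hs0, hsε⟩
      simp only at hr0 hrε hs0 hsε ⊢
      rw [abs_sub_lt_iff]
      constructor <;> linarith
    calc μf (A ∩ Tf (t n) ⁻¹' A) ≤ (μ.prod volume) (B n ×ˢ Set.Ico (0:ℝ) ε) := by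
          rw [hμf]
          exact le_trans (Measure.restrict_le_self _) (measure_mono hsub)
      _ = ENNReal.ofReal ε * μ (B n) := by
          rw [Measure.prod_prod, Real.volume_Ico, sub_zero, mul_comm]
  have h2 : (atTop.liminf fun n => μf (A ∩ Tf (t n) ⁻¹' A)) ≤
      atTop.liminf fun n => ENNReal.ofReal ε * μ (B n) :=
    liminf_le_liminf hev
  have hεne : (ENNReal.ofReal ε) ≠ 0 := by
    simp [ENNReal.ofReal_eq_zero, not_le, hε]
  have h3 : (atTop.liminf fun n => ENNReal.ofReal ε * μ (B n)) ≤
      ENNReal.ofReal ε * atTop.liminf fun n => μ (B n) := by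
    have := ENNReal.liminf_mul_le (f := atTop) (u := fun _ => ENNReal.ofReal ε)
      (v := fun n => μ (B n)) (by rw [limsup_const]; exact Or.inl hεne)
      (by rw [limsup_const]; exact Or.inl ENNReal.ofReal_ne_top)
    rwa [limsup_const] at this
  have hfin : ENNReal.ofReal u * ENNReal.ofReal ε ≤
      ENNReal.ofReal ε * atTop.liminf fun n => μ (B n) := by
    calc ENNReal.ofReal u * ENNReal.ofReal ε ≤ _ := h1
      _ ≤ _ := h2
      _ ≤ _ := h3
  rw [mul_comm (ENNReal.ofReal u)] at hfin
  exact (ENNReal.mul_le_mul_iff_right hεne ENNReal.ofReal_ne_top).mp hfin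
end
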